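/- arXiv:1810.04416 — 2 statements merged into one kernel-verified Lean document; each statement's English description precedes it below -/
import Mathlib

section
/- Let D ∈ ℕ₊ and let h : ℝ^D → ℂ be a positive definite continuous function, let Q ∈ ℕ₊, α_1,…,α_Q > 0, ω_1,…,ω_Q ∈ ℝ^D and γ_1,…,γ_Q ∈ ℝ^D with strictly positive entries. Then the generalized spectral kernel k_GS(τ) = Σ_{q=1}^Q α_q · h(τ ∘ γ_q) · exp(2πi ω_q·τ) is a positive definite function on ℝ^D, i.e. (x, x') ↦ k_GS(x − x') is a positive definite kernel. -/
open MeasureTheory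
open scoped BigOperators

noncomputable section

/-- `k` is a positive definite kernel on `ℝ^D`: every quadratic form
`∑ i j, conj (c i) * c j * k (x i) (x j)` is a nonnegative real number. -/
def IsPosDefKernel {D : ℕ} (k : (Fin D → ℝ) → (Fin D → ℝ) → ℂ) : Prop :=
  ∀ (n : ℕ) (x : Fin n → Fin D → ℝ) (c : Fin n → ℂ),
    0 ≤ (∑ i, ∑ j, (starRingEnd ℂ) (c i) * c j * k (x i) (x j)).re ∧
      (∑ i, ∑ j, (starRingEnd ℂ) (c i) * c j * k (x i) (x j)).im = 0

/-- Euclidean dot product on `ℝ^D`. -/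
def dotR {D : ℕ} (x y : Fin D → ℝ) : ℝ := ∑ d, x d * y d

/-- `exp(2 π i ⟨ω, x⟩)`. -/
def e2πi {D : ℕ} (ω x : Fin D → ℝ) : ℂ :=
  Complex.exp (2 * (Real.pi : ℂ) * Complex.I * ((dotR ω x : ℝ) : ℂ))

lemma dotR_sub {D : ℕ} (ω a b : Fin D → ℝ) : dotR ω (a - b) = dotR ω a - dotR ω b := by
  simp [dotR, mul_sub, Finset.sum_sub_distrib]

lemma e2πi_sub {D : ℕ} (ω a b : Fin D → ℝ) :
    e2πi ω (a - b) = e2πi ω a * (starRingEnd ℂ) (e2πi ω b) := by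
  unfold e2πi
  rw [← Complex.exp_conj, ← Complex.exp_add, dotR_sub]
  congr 1
  simp only [map_mul, Complex.conj_I, Complex.conj_ofReal, map_ofNat,
    Complex.ofReal_sub]
  ring

/-- The generalized spectral kernel
`k_GS(τ) = ∑ q, α q • h (τ ∘ γ q) • exp(2πi ⟨ω q, τ⟩)` built from a positive definite
continuous function `h` with positive weights is itself a positive definite function.
Here `τ * γ q` is the Hadamard (elementwise) product. -/
theorem generalized_spectral_kernel_posdef (D : ℕ) (hD : 0 < D)
    (h : (Fin D → ℝ) → ℂ)
    (hpd_h : IsPosDefKernel fun x x' => h (x - x'))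
    (hcont_h : Continuous h)
    (Q : ℕ) (hQ : 0 < Q)
    (α : Fin Q → ℝ) (hα : ∀ q, 0 < α q)
    (ω : Fin Q → Fin D → ℝ)
    (γ : Fin Q → Fin D → ℝ) (hγ : ∀ q d, 0 < γ q d) :
    IsPosDefKernel fun x x' =>
      ∑ q, (α q : ℂ) * h ((x - x') * γ q) * e2πi (ω q) (x - x') := by
  intro n x c
  -- rewrite the quadratic form as a sum over q of weighted PD quadratic forms
  have key : (∑ i, ∑ j, (starRingEnd ℂ) (c i) * c j *
        (∑ q, (α q : ℂ) * h ((x i - x j) * γ q) * e2πi (ω q) (x i - x j)))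
      = ∑ q, (α q : ℂ) *
        (∑ i, ∑ j, (starRingEnd ℂ) (c i * (starRingEnd ℂ) (e2πi (ω q) (x i)))
          * (c j * (starRingEnd ℂ) (e2πi (ω q) (x j)))
          * h ((fun i => x i * γ q) i - (fun i => x i * γ q) j)) := by
    calc (∑ i, ∑ j, (starRingEnd ℂ) (c i) * c j *
          (∑ q, (α q : ℂ) * h ((x i - x j) * γ q) * e2πi (ω q) (x i - x j)))
        = ∑ i, ∑ q, ∑ j, (starRingEnd ℂ) (c i) * c j *
          ((α q : ℂ) * h ((x i - x j) * γ q) * e2πi (ω q) (x i - x j)) := by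
          refine Finset.sum_congr rfl fun i _ => ?_
          simp_rw [Finset.mul_sum]
          exact Finset.sum_comm
      _ = ∑ q, ∑ i, ∑ j, (starRingEnd ℂ) (c i) * c j *
          ((α q : ℂ) * h ((x i - x j) * γ q) * e2πi (ω q) (x i - x j)) := Finset.sum_comm
      _ = _ := ?_
    refine Finset.sum_congr rfl fun q _ => ?_
    rw [Finset.mul_sum]
    refine Finset.sum_congr rfl fun i _ => ?_
    rw [Finset.mul_sum]
    refine Finset.sum_congr rfl fun j _ => ?_
    simp only [e2πi_sub, map_mul, RingHom.map_mul, RingHomCompTriple.comp_apply,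
      Complex.conj_conj]
    have : (x i - x j) * γ q = x i * γ q - x j * γ q := sub_mul _ _ _
    rw [this]
    simp only [RingHom.id_apply]
    ring
  constructor
  · rw [key, Complex.re_sum]
    refine Finset.sum_nonneg fun q _ => ?_
    have := hpd_h n (fun i => x i * γ q) (fun i => c i * (starRingEnd ℂ) (e2πi (ω q) (x i)))
    simp only at this
    rw [Complex.mul_re, Complex.ofReal_re, Complex.ofReal_im, zero_mul, sub_zero]
    exact mul_nonneg (hα q).le this.1
  · rw [key, Complex.im_sum]
    refine Finset.sum_eq_zero fun q _ => ?_
    have := hpd_h n (fun i => x i * γ q) (fun i => c i * (starRingEnd ℂ) (e2πi (ω q) (x i)))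
    simp only at this
    rw [Complex.mul_im, Complex.ofReal_re, Complex.ofReal_im, zero_mul, add_zero, this.2,
      mul_zero]
end
end

section
/- Let D, Q ∈ ℕ₊, let α_1,…,α_Q ≥ 0, ω_1,…,ω_Q ∈ ℝ^D, and let Σ_1,…,Σ_Q be real symmetric positive semidefinite D×D matrices. Then the spectral mixture kernel k_SM(τ) = Σ_{q=1}^Q α_q exp(−2π² τᵀ Σ_q τ) cos(2π ω_q·τ) is a positive definite function on ℝ^D, i.e. (x, x') ↦ k_SM(x − x') is a positive definite kernel. -/
open MeasureTheory Matrix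
open scoped BigOperators

noncomputable section

lemma dotR_expand {D : ℕ} (a b : Fin D → ℝ) :
    dotR (a - b) (a - b) = dotR a a - 2 * dotR a b + dotR b b := by
  simp only [dotR, Pi.sub_apply, Finset.mul_sum, ← Finset.sum_sub_distrib,
    ← Finset.sum_add_distrib]
  exact Finset.sum_congr rfl fun d _ => by ring

lemma dotR_smul2 {D : ℕ} (t : ℝ) (a b : Fin D → ℝ) :
    dotR (fun d => t * a d) (fun d => t * b d) = (t * t) * dotR a b := by
  simp only [dotR, Finset.mul_sum]
  exact Finset.sum_congr rfl fun d _ => by ring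

lemma dotR_sub_right {D : ℕ} (w a b : Fin D → ℝ) :
    dotR w (a - b) = dotR w a - dotR w b := by
  simp only [dotR, Pi.sub_apply, ← Finset.sum_sub_distrib]
  exact Finset.sum_congr rfl fun d _ => by ring

namespace SMaux
variable {n : ℕ}

def qf (c : Fin n → ℂ) (f : Fin n → Fin n → ℂ) : ℂ :=
  ∑ i, ∑ j, (starRingEnd ℂ) (c i) * c j * f i j

def PDK (f : Fin n → Fin n → ℂ) : Prop :=
  ∀ c : Fin n → ℂ, 0 ≤ (qf c f).re ∧ (qf c f).im = 0

lemma qf_congr {c : Fin n → ℂ} {f g : Fin n → Fin n → ℂ} (h : ∀ i j, f i j = g i j) :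
    qf c f = qf c g := by
  unfold qf; exact Finset.sum_congr rfl fun i _ => Finset.sum_congr rfl fun j _ => by rw [h]

lemma PDK.congr {f g : Fin n → Fin n → ℂ} (h : ∀ i j, f i j = g i j) (hf : PDK f) : PDK g := by
  intro c; rw [← qf_congr h]; exact hf c

lemma PDK.add {f g : Fin n → Fin n → ℂ} (hf : PDK f) (hg : PDK g) :
    PDK (fun i j => f i j + g i j) := by
  intro c
  have h : qf c (fun i j => f i j + g i j) = qf c f + qf c g := by
    unfold qf
    rw [← Finset.sum_add_distrib]
    refine Finset.sum_congr rfl fun i _ => ?_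
    rw [← Finset.sum_add_distrib]
    exact Finset.sum_congr rfl fun j _ => by ring
  rw [h]
  exact ⟨add_nonneg (hf c).1 (hg c).1, by simp [Complex.add_im, (hf c).2, (hg c).2]⟩

lemma PDK.zero : PDK (fun _ _ : Fin n => (0 : ℂ)) := by
  intro c; simp [qf]

lemma PDK.sum {ι : Type*} (s : Finset ι) (f : ι → Fin n → Fin n → ℂ)
    (h : ∀ q ∈ s, PDK (f q)) : PDK (fun i j => ∑ q ∈ s, f q i j) := by
  classical
  induction s using Finset.induction_on with
  | empty => simpa using PDK.zero
  | @insert a s' hq ih =>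
    have := (h a (Finset.mem_insert_self a s')).add
      (ih fun q hqs => h q (Finset.mem_insert_of_mem hqs))
    exact this.congr (by intro i j; simp [Finset.sum_insert hq])

lemma PDK.smul {f : Fin n → Fin n → ℂ} (a : ℝ) (ha : 0 ≤ a) (hf : PDK f) :
    PDK (fun i j => (a : ℂ) * f i j) := by
  intro c
  have h : qf c (fun i j => (a : ℂ) * f i j) = (a : ℂ) * qf c f := by
    unfold qf
    rw [Finset.mul_sum]
    refine Finset.sum_congr rfl fun i _ => ?_
    rw [Finset.mul_sum]
    exact Finset.sum_congr rfl fun j _ => by ring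
  rw [h]
  constructor
  · simp only [Complex.mul_re, Complex.ofReal_re, Complex.ofReal_im, zero_mul, sub_zero]
    exact mul_nonneg ha (hf c).1
  · simp [Complex.mul_im, (hf c).2]

lemma PDK.rankone_real (v : Fin n → ℝ) :
    PDK (fun i j => ((v i * v j : ℝ) : ℂ)) := by
  intro c
  have h : qf c (fun i j => ((v i * v j : ℝ) : ℂ))
      = (starRingEnd ℂ) (∑ j, c j * (v j : ℂ)) * (∑ j, c j * (v j : ℂ)) := by
    unfold qf
    rw [map_sum, Finset.sum_mul]
    refine Finset.sum_congr rfl fun i _ => ?_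
    rw [Finset.mul_sum]
    refine Finset.sum_congr rfl fun j _ => ?_
    push_cast
    simp only [_root_.map_mul, Complex.conj_ofReal]
    ring
  rw [h, Complex.conj_mul', ← Complex.ofReal_pow]
  constructor
  · simp only [Complex.ofReal_re]
    positivity
  · simp [← Complex.ofReal_pow]

lemma PDK.scale {f : Fin n → Fin n → ℂ} (d : Fin n → ℝ) (hf : PDK f) :
    PDK (fun i j => ((d i : ℂ)) * ((d j : ℂ)) * f i j) := by
  intro c
  have h : qf c (fun i j => ((d i : ℂ)) * ((d j : ℂ)) * f i j)
      = qf (fun i => (d i : ℂ) * c i) f := by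
    unfold qf
    refine Finset.sum_congr rfl fun i _ => Finset.sum_congr rfl fun j _ => ?_
    simp only [_root_.map_mul, Complex.conj_ofReal]
    ring
  rw [h]; exact hf _

end SMaux

namespace SMaux
variable {n : ℕ}

lemma PDK.pow_gram {D : ℕ} (u : Fin n → Fin D → ℝ) (m : ℕ) :
    PDK (fun i j => ((dotR (u i) (u j) ^ m : ℝ) : ℂ)) := by
  have hexpand : ∀ i j : Fin n, (dotR (u i) (u j)) ^ m
      = ∑ p : Fin m → Fin D, (∏ l, u i (p l)) * (∏ l, u j (p l)) := by
    intro i j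
    rw [dotR, Fintype.sum_pow]
    exact Finset.sum_congr rfl fun p _ => Finset.prod_mul_distrib
  refine (PDK.sum Finset.univ
    (fun (p : Fin m → Fin D) => fun i j => (((∏ l, u i (p l)) * (∏ l, u j (p l)) : ℝ) : ℂ))
    (fun p _ => PDK.rankone_real (fun i => ∏ l, u i (p l)))).congr ?_
  intro i j
  rw [hexpand i j]
  push_cast
  rfl

lemma PDK.exp_gram {D : ℕ} (u : Fin n → Fin D → ℝ) :
    PDK (fun i j => ((Real.exp (dotR (u i) (u j)) : ℝ) : ℂ)) := by
  intro c
  set g : Fin n → Fin n → ℝ := fun i j => dotR (u i) (u j) with hg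
  set F : ℕ → Fin n → Fin n → ℂ := fun m i j =>
    (starRingEnd ℂ) (c i) * c j * ((((m.factorial : ℝ))⁻¹ * g i j ^ m : ℝ) : ℂ) with hF
  have hsumR : ∀ x : ℝ, Summable (fun m : ℕ => ((m.factorial : ℝ))⁻¹ * x ^ m) := by
    intro x
    exact (Real.summable_pow_div_factorial x).congr fun m => by
      rw [div_eq_mul_inv, mul_comm]
  have hexpR : ∀ x : ℝ, Real.exp x = ∑' m : ℕ, ((m.factorial : ℝ))⁻¹ * x ^ m := by
    intro x
    rw [Real.exp_eq_exp_ℝ, NormedSpace.exp_eq_tsum ℝ]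
    simp [smul_eq_mul]
  have hexp : ∀ x : ℝ, ((Real.exp x : ℝ) : ℂ)
      = ∑' m : ℕ, (((((m.factorial : ℝ))⁻¹ * x ^ m : ℝ)) : ℂ) := by
    intro x
    rw [hexpR x, Complex.ofReal_tsum]
  have hsumC : ∀ i j : Fin n, Summable (fun m : ℕ => F m i j) := by
    intro i j
    exact ((Complex.summable_ofReal.mpr (hsumR (g i j))).mul_left _)
  have key : qf c (fun i j => ((Real.exp (g i j) : ℝ) : ℂ)) = ∑' m : ℕ, ∑ i, ∑ j, F m i j := by
    unfold qf
    calc ∑ i, ∑ j, (starRingEnd ℂ) (c i) * c j * ((Real.exp (g i j) : ℝ) : ℂ)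
        = ∑ i, ∑ j, ∑' m : ℕ, F m i j := by
          refine Finset.sum_congr rfl fun i _ => Finset.sum_congr rfl fun j _ => ?_
          rw [hexp (g i j), ← tsum_mul_left]
      _ = ∑ i, ∑' m : ℕ, ∑ j, F m i j :=
          Finset.sum_congr rfl fun i _ => (Summable.tsum_finsetSum fun j _ => hsumC i j).symm
      _ = ∑' m : ℕ, ∑ i, ∑ j, F m i j :=
          (Summable.tsum_finsetSum fun i _ => summable_sum fun j _ => hsumC i j).symm
  have hFsummable : Summable (fun m => ∑ i, ∑ j, F m i j) :=
    summable_sum fun i _ => summable_sum fun j _ => hsumC i j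
  have hterm : ∀ m : ℕ, 0 ≤ (∑ i, ∑ j, F m i j).re ∧ (∑ i, ∑ j, F m i j).im = 0 := by
    intro m
    have hpd : PDK (fun i j => ((((m.factorial : ℝ))⁻¹ * g i j ^ m : ℝ) : ℂ)) := by
      refine ((PDK.pow_gram u m).smul ((m.factorial : ℝ))⁻¹ (by positivity)).congr ?_
      intro i j
      push_cast
      rfl
    exact hpd c
  constructor
  · rw [show qf c (fun i j => ((Real.exp (dotR (u i) (u j)) : ℝ) : ℂ))
        = qf c (fun i j => ((Real.exp (g i j) : ℝ) : ℂ)) from rfl, key,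
      Complex.re_tsum hFsummable]
    exact tsum_nonneg fun m => (hterm m).1
  · rw [show qf c (fun i j => ((Real.exp (dotR (u i) (u j)) : ℝ) : ℂ))
        = qf c (fun i j => ((Real.exp (g i j) : ℝ) : ℂ)) from rfl, key,
      Complex.im_tsum hFsummable]
    rw [tsum_congr fun m => (hterm m).2]
    exact tsum_zero

end SMaux

/-- The spectral mixture kernel
`k_SM(τ) = ∑ q, α q exp(-2π² τᵀ Σ_q τ) cos(2π ⟨ω_q, τ⟩)` with nonnegative weights and real
symmetric positive semidefinite matrices `Σ_q` is a positive definite function on `ℝ^D`. -/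
theorem spectral_mixture_posdef (D Q : ℕ) (hD : 0 < D) (hQ : 0 < Q)
    (α : Fin Q → ℝ) (hα : ∀ q, 0 ≤ α q)
    (ω : Fin Q → Fin D → ℝ)
    (S : Fin Q → Matrix (Fin D) (Fin D) ℝ) (hS : ∀ q, (S q).PosSemidef) :
    IsPosDefKernel fun x x' =>
      ((∑ q, α q * Real.exp (-(2 * Real.pi ^ 2) * ((x - x') ⬝ᵥ (S q *ᵥ (x - x')))) *
          Real.cos (2 * Real.pi * dotR (ω q) (x - x')) : ℝ) : ℂ) := by
  intro n xx c
  have main : SMaux.PDK (fun i j : Fin n =>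
      ((∑ q, α q * Real.exp (-(2 * Real.pi ^ 2) * ((xx i - xx j) ⬝ᵥ (S q *ᵥ (xx i - xx j)))) *
          Real.cos (2 * Real.pi * dotR (ω q) (xx i - xx j)) : ℝ) : ℂ)) := by
    refine (SMaux.PDK.sum Finset.univ (fun q i j =>
      ((α q * Real.exp (-(2 * Real.pi ^ 2) * ((xx i - xx j) ⬝ᵥ (S q *ᵥ (xx i - xx j)))) *
          Real.cos (2 * Real.pi * dotR (ω q) (xx i - xx j)) : ℝ) : ℂ)) ?_).congr ?_
    · intro q _
      obtain ⟨B, hB⟩ : ∃ B : Matrix (Fin D) (Fin D) ℝ, S q = Bᴴ * B := by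
        open scoped MatrixOrder Matrix.Norms.L2Operator in
        exact CStarAlgebra.nonneg_iff_eq_star_mul_self.mp (hS q).nonneg
      set y : Fin n → Fin D → ℝ := fun i => B *ᵥ xx i with hy
      set u : Fin n → Fin D → ℝ := fun i d => 2 * Real.pi * y i d with hu
      set w1 : Fin n → ℝ := fun i =>
        Real.exp (-(2 * Real.pi ^ 2) * dotR (y i) (y i)) *
          Real.cos (2 * Real.pi * dotR (ω q) (xx i)) with hw1
      set w2 : Fin n → ℝ := fun i =>
        Real.exp (-(2 * Real.pi ^ 2) * dotR (y i) (y i)) *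
          Real.sin (2 * Real.pi * dotR (ω q) (xx i)) with hw2
      have hPD1 : SMaux.PDK (fun i j =>
          ((α q * (w1 i * w1 j * Real.exp (dotR (u i) (u j))) : ℝ) : ℂ)) := by
        refine (((SMaux.PDK.exp_gram u).scale w1).smul (α q) (hα q)).congr ?_
        intro i j; push_cast; ring
      have hPD2 : SMaux.PDK (fun i j =>
          ((α q * (w2 i * w2 j * Real.exp (dotR (u i) (u j))) : ℝ) : ℂ)) := by
        refine (((SMaux.PDK.exp_gram u).scale w2).smul (α q) (hα q)).congr ?_
        intro i j; push_cast; ring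
      refine (hPD1.add hPD2).congr ?_
      intro i j
      rw [← Complex.ofReal_add]
      congr 1
      have hquad : (xx i - xx j) ⬝ᵥ (S q *ᵥ (xx i - xx j))
          = dotR (y i - y j) (y i - y j) := by
        rw [hB, ← Matrix.mulVec_mulVec, Matrix.dotProduct_mulVec,
          Matrix.conjTranspose_eq_transpose_of_trivial, Matrix.vecMul_transpose,
          ← Matrix.mulVec_sub]
        rfl
      have hdu : dotR (u i) (u j)
          = (2 * Real.pi) * (2 * Real.pi) * dotR (y i) (y j) := dotR_smul2 _ _ _
      have hcos : dotR (ω q) (xx i - xx j)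
          = dotR (ω q) (xx i) - dotR (ω q) (xx j) := dotR_sub_right _ _ _
      rw [hquad, hcos, dotR_expand, hdu, hw1, hw2]
      rw [mul_sub (2 * Real.pi), Real.cos_sub]
      rw [show -(2 * Real.pi ^ 2) *
            (dotR (y i) (y i) - 2 * dotR (y i) (y j) + dotR (y j) (y j))
          = (-(2 * Real.pi ^ 2) * dotR (y i) (y i)) +
            ((-(2 * Real.pi ^ 2) * dotR (y j) (y j)) +
              ((2 * Real.pi) * (2 * Real.pi) * dotR (y i) (y j))) from by ring,
        Real.exp_add, Real.exp_add]
      ring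
    · intro i j
      push_cast
      rfl
  exact main c
end
end
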